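/- Let (g,J) be a nilpotent Lie algebra with integrable complex structure, z a central element, and W = span_ℝ{z, Jz}. Then the image of the adjoint map ad_{Jz} : g → g intersects W trivially: (im ad_{Jz}) ∩ W = 0. -/

import Mathlib

/-- In a nilpotent Lie algebra with integrable complex structure, for `z` central and
`W = span {z, Jz}`, the image of `ad_{Jz}` intersects `W` trivially. -/
theorem stmt_10 (g : Type*) [LieRing g] [LieAlgebra ℝ g] [LieRing.IsNilpotent g]
    (J : g →ₗ[ℝ] g) (hJ : J ∘ₗ J = -LinearMap.id)
    (hint : ∀ x y : g, ⁅x, y⁆ - ⁅J x, J y⁆ + J ⁅J x, y⁆ + J ⁅x, J y⁆ = 0)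
    (z : g) (hz : z ∈ LieAlgebra.center ℝ g) :
    LinearMap.range (LieAlgebra.ad ℝ g (J z)) ⊓ Submodule.span ℝ {z, J z} = ⊥ := by
  have hzc : ∀ y : g, ⁅y, z⁆ = 0 := fun y => hz y
  have hJJ : ∀ v : g, J (J v) = -v := by
    intro v
    have := LinearMap.ext_iff.mp hJ v
    simpa using this
  -- key identity: ad_{Jz}(Jx) = J (ad_{Jz} x)
  have key : ∀ x : g, ⁅J z, J x⁆ = J ⁅J z, x⁆ := by
    intro x
    have h := hint x z
    rw [hzc x, hzc (J x)] at h
    have h' : -⁅J x, J z⁆ + J ⁅x, J z⁆ = 0 := by simpa using h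
    have h1 : ⁅J z, J x⁆ = -⁅J x, J z⁆ := (lie_skew _ _).symm
    have h2 : ⁅J z, x⁆ = -⁅x, J z⁆ := (lie_skew _ _).symm
    rw [h1, h2, map_neg]
    linear_combination (norm := abel) h'
  rw [Submodule.eq_bot_iff]
  intro w hw
  obtain ⟨hw1, hw2⟩ := Submodule.mem_inf.mp hw
  obtain ⟨x, rfl⟩ := hw1
  rw [Submodule.mem_span_pair] at hw2
  obtain ⟨a, b, hab⟩ := hw2
  have hA : ⁅J z, x⁆ = a • z + b • J z := by
    rw [hab, LieAlgebra.ad_apply]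
  have hAJ : ⁅J z, J x⁆ = a • J z - b • z := by
    rw [key, hA, map_add, map_smul, map_smul, hJJ]
    module
  -- case on a = b = 0
  by_cases hc : a = 0 ∧ b = 0
  · rw [← hab, hc.1, hc.2]; simp
  · have hc' : a ^ 2 + b ^ 2 ≠ 0 := by
      intro h
      have ha : a = 0 := by nlinarith [sq_nonneg a, sq_nonneg b]
      have hb : b = 0 := by nlinarith [sq_nonneg a, sq_nonneg b]
      exact hc ⟨ha, hb⟩
    set y : g := (a ^ 2 + b ^ 2)⁻¹ • (b • x + a • J x) with hy
    have hJzy : ⁅J z, y⁆ = J z := by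
      rw [hy, lie_smul, lie_add, lie_smul, lie_smul, hA, hAJ]
      match_scalars <;> field_simp [hc'] <;> ring
    have hyJz : ⁅y, J z⁆ = -J z := by rw [← lie_skew, hJzy]
    -- ad y is nilpotent
    obtain ⟨n, hn⟩ := LieModule.isNilpotent_toEnd_of_isNilpotent ℝ g g y
    have iter : ∀ k : ℕ, ((LieModule.toEnd ℝ g g y) ^ k) (J z) = ((-1 : ℝ) ^ k) • J z := by
      intro k
      induction k with
      | zero => simp
      | succ k ih =>
        have h1 : (LieModule.toEnd ℝ g g y) (J z) = -J z := by
          simpa [LieModule.toEnd_apply_apply] using hyJz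
        rw [pow_succ, Module.End.mul_apply, h1, map_neg, ih, pow_succ]
        module
    have hJz0 : J z = 0 := by
      have := iter n
      rw [hn] at this
      have h0 : (0 : g) = ((-1 : ℝ) ^ n) • J z := by simpa using this
      have : ((-1 : ℝ) ^ n) ≠ 0 := by positivity
      rcases smul_eq_zero.mp h0.symm with h | h
      · exact absurd h this
      · exact h
    have hz0 : z = 0 := by
      have := hJJ z
      rw [hJz0] at this
      simpa using this.symm
    rw [← hab, hz0]
    simp
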